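/- Fix a prime power q and integer D ≥ 1, and let κ' = i·q^{-D/2} (i the imaginary unit). For 1 ≤ j ≤ D-1, let t'(j) be the 2×2 complex matrix i·times the matrix with rows (q^{-D/2}(q^D - q^j + 1), q^{D/2}(q^{j-D} - 1)) and (q^{-D/2}(1 - q^j), q^{j-D/2}). Then (t'(j) - κ'·I)(t'(j) + κ'^{-1}·I) = 0. -/
import Mathlib


/-- the blocks `t'(j)`, `1 ≤ j ≤ D-1`, satisfy `(t'(j) - κ')(t'(j) + κ'⁻¹) = 0`
with `κ' = i·q^{-D/2}`. -/
theorem stmt_8 (q : ℕ) (hpp : IsPrimePow q) (D : ℕ) (hD : 1 ≤ D)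
    (κ' : ℂ) (hκ' : κ' = Complex.I * (((q : ℝ) ^ (-(D : ℝ) / 2) : ℝ) : ℂ))
    (t' : ℕ → Matrix (Fin 2) (Fin 2) ℂ)
    (ht' : ∀ j, 1 ≤ j → j ≤ D - 1 → t' j = Complex.I •
      !![(((q : ℝ) ^ (-(D : ℝ) / 2) : ℝ) : ℂ) * ((q : ℂ) ^ D - (q : ℂ) ^ j + 1),
         (((q : ℝ) ^ ((D : ℝ) / 2) : ℝ) : ℂ) * ((((q : ℝ) ^ ((j : ℝ) - (D : ℝ)) : ℝ) : ℂ) - 1);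
         (((q : ℝ) ^ (-(D : ℝ) / 2) : ℝ) : ℂ) * (1 - (q : ℂ) ^ j),
         (((q : ℝ) ^ ((j : ℝ) - (D : ℝ) / 2) : ℝ) : ℂ)]) :
    ∀ j, 1 ≤ j → j ≤ D - 1 →
      (t' j - κ' • (1 : Matrix (Fin 2) (Fin 2) ℂ)) *
        (t' j + κ'⁻¹ • (1 : Matrix (Fin 2) (Fin 2) ℂ)) = 0 := by
  intro j hj1 hj2
  have hq0 : 0 < (q:ℝ) := by exact_mod_cast hpp.pos
  set r : ℝ := (q:ℝ) with hr
  set x : ℂ := (((q : ℝ) ^ (-(D : ℝ) / 2) : ℝ) : ℂ) with hxdef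
  set b : ℂ := (((q : ℝ) ^ ((D : ℝ) / 2) : ℝ) : ℂ) with hbdef
  have hxb : x * b = 1 := by
    rw [hxdef, hbdef, ← Complex.ofReal_mul, ← Real.rpow_add hq0,
      show (-(D:ℝ)/2 + (D:ℝ)/2) = 0 by ring, Real.rpow_zero, Complex.ofReal_one]
  have hxx : (q:ℂ)^D * (x * x) = 1 := by
    have : (r ^ (D:ℝ)) * (r ^ (-(D:ℝ)/2) * r ^ (-(D:ℝ)/2)) = 1 := by
      rw [← Real.rpow_add hq0, ← Real.rpow_add hq0]
      norm_num
    have := congrArg (Complex.ofReal) this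
    push_cast [Real.rpow_natCast] at this
    exact this
  have h2 : ((((q:ℝ) ^ ((j : ℝ) - (D : ℝ)) : ℝ)) : ℂ) = (q:ℂ)^j * (x * x) := by
    have : r ^ ((j:ℝ) - (D:ℝ)) = r ^ (j:ℝ) * (r ^ (-(D:ℝ)/2) * r ^ (-(D:ℝ)/2)) := by
      rw [← Real.rpow_add hq0, ← Real.rpow_add hq0]
      ring_nf
    have := congrArg (Complex.ofReal) this
    push_cast [Real.rpow_natCast] at this
    exact this
  have h3 : ((((q:ℝ) ^ ((j : ℝ) - (D : ℝ)/2) : ℝ)) : ℂ) = (q:ℂ)^j * x := by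
    have : r ^ ((j:ℝ) - (D:ℝ)/2) = r ^ (j:ℝ) * r ^ (-(D:ℝ)/2) := by
      rw [← Real.rpow_add hq0]
      ring_nf
    have := congrArg (Complex.ofReal) this
    push_cast [Real.rpow_natCast] at this
    exact this
  have hκinv : κ'⁻¹ = -(Complex.I * b) := by
    refine inv_eq_of_mul_eq_one_right ?_
    rw [hκ']
    have : Complex.I * x * -(Complex.I * b) = -(Complex.I * Complex.I) * (x * b) := by ring
    rw [this, Complex.I_mul_I, hxb]; ring
  have hx0 : x ≠ 0 := by
    rw [hxdef]
    exact_mod_cast (Real.rpow_pos_of_pos hq0 _).ne'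
  have hb' : b = x⁻¹ := eq_inv_of_mul_eq_one_left (by linear_combination hxb)
  have hqD : ((q:ℂ))^D = (x*x)⁻¹ := eq_inv_of_mul_eq_one_left (by linear_combination hxx)
  rw [ht' j hj1 hj2, hκinv, hκ', h2, h3]
  ext i k
  fin_cases i <;> fin_cases k <;>
    simp [Matrix.mul_apply, Fin.sum_univ_two, Matrix.one_apply] <;>
    simp only [hb', hqD] <;> field_simp <;> ring
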